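/- Define m-linear forms L_m on (ℝ^{2^{m-1}})^m for m ≥ 3 by L_m(x⁽¹⁾,...,x⁽ᵐ⁾) = (x₁⁽¹⁾+x₂⁽¹⁾)T_{m-1}(x⁽²⁾,...,x⁽ᵐ⁾) + (x₁⁽¹⁾-x₂⁽¹⁾)T_{m-1}(B^{2^{m-2}}x⁽²⁾, B^{2^{m-2}}x⁽³⁾, B^{2^{m-3}}x⁽⁴⁾, ..., B²x⁽ᵐ⁾). Then ‖L_m‖ = 2^{m-1} (sup norm over the product of ℓ∞ unit balls). -/
import Mathlib


/-- The iterated mixed `ℓ_{q₁}(ℓ_{q₂}(⋯ℓ_{q_m}))` norm of an `m`-indexed array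
`f` with indices ranging over `{0, ..., N-1}`:
`(Σ_{j₁<N}(⋯(Σ_{j_m<N}|f(j₁,...,j_m)|^{q_m})^{q_{m-1}/q_m}⋯)^{q₁/q₂})^{1/q₁}`. -/
noncomputable def mixedNorm : (m : ℕ) → (N : ℕ) → (ℕ → ℝ) → ((ℕ → ℕ) → ℝ) → ℝ
  | 0, _, _, f => |f fun _ => 0|
  | m + 1, N, q, f =>
      (∑ j : Fin N, (mixedNorm m N (fun i => q (i + 1))
          (fun idx => f (fun i => if i = 0 then (j : ℕ) else idx (i - 1)))) ^ q 0)
        ^ (1 / q 0)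

/-- The `j`-th canonical basis vector of `ℝⁿ` (interpreted as `0` if `j ≥ n`). -/
def eVec (n : ℕ) (j : ℕ) : Fin n → ℝ := fun i => if (i : ℕ) = j then 1 else 0

/-- The supremum norm of an `m`-linear form on `(ℓ∞ⁿ)^m`. -/
noncomputable def supNorm (m n : ℕ)
    (T : MultilinearMap ℝ (fun _ : Fin m => (Fin n → ℝ)) ℝ) : ℝ :=
  sSup {v : ℝ | ∃ x : Fin m → Fin n → ℝ, (∀ i, ‖x i‖ ≤ 1) ∧ v = |T x|}

/-- The shift exponents in the inductive definition of `T_m`. -/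
def Tshift (m k : ℕ) : ℕ := if k ≤ 1 then 2 ^ (m - 1) else 2 ^ (m - k)

/-- The inductively defined `m`-linear forms `T_m` of Diniz et al.:
`T₂(x,y) = x₁y₁ + x₁y₂ + x₂y₁ - x₂y₂` and
`T_{m+1}(x⁽¹⁾,...,x⁽ᵐ⁺¹⁾) = (x₁⁽ᵐ⁺¹⁾+x₂⁽ᵐ⁺¹⁾)T_m(x⁽¹⁾,...,x⁽ᵐ⁾)
  + (x₁⁽ᵐ⁺¹⁾-x₂⁽ᵐ⁺¹⁾)T_m(B^{2^{m-1}}x⁽¹⁾, B^{2^{m-1}}x⁽²⁾, B^{2^{m-2}}x⁽³⁾, ..., B²x⁽ᵐ⁾)`,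
where `B` is the backward shift. The `k`-th argument (0-indexed) is `x k : ℕ → ℝ`. -/
noncomputable def Tform : ℕ → (ℕ → ℕ → ℝ) → ℝ
  | 0, _ => 0
  | 1, x => x 0 0
  | 2, x => x 0 0 * x 1 0 + x 0 0 * x 1 1 + x 0 1 * x 1 0 - x 0 1 * x 1 1
  | m + 3, x =>
      (x (m + 2) 0 + x (m + 2) 1) * Tform (m + 2) x
        + (x (m + 2) 0 - x (m + 2) 1)
            * Tform (m + 2) (fun k j => x k (j + Tshift (m + 2) k))

/-- The shift exponents in the definition of `L_m` (applied to the `k`-th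
argument, 0-indexed, of `T_{m-1}`). -/
def Lshift (m k : ℕ) : ℕ := if k ≤ 1 then 2 ^ (m - 2) else 2 ^ (m - 1 - k)

/-- The `m`-linear forms `L_m` (for `m ≥ 3`):
`L_m(x⁽¹⁾,...,x⁽ᵐ⁾) = (x₁⁽¹⁾+x₂⁽¹⁾)T_{m-1}(x⁽²⁾,...,x⁽ᵐ⁾)
  + (x₁⁽¹⁾-x₂⁽¹⁾)T_{m-1}(B^{2^{m-2}}x⁽²⁾, B^{2^{m-2}}x⁽³⁾, B^{2^{m-3}}x⁽⁴⁾, ..., B²x⁽ᵐ⁾)`. -/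
noncomputable def Lform (m : ℕ) (x : ℕ → ℕ → ℝ) : ℝ :=
  (x 0 0 + x 0 1) * Tform (m - 1) (fun k => x (k + 1))
    + (x 0 0 - x 0 1) * Tform (m - 1) (fun k j => x (k + 1) (j + Lshift m k))

lemma abs_pm (a b : ℝ) (ha : |a| ≤ 1) (hb : |b| ≤ 1) : |a + b| + |a - b| ≤ 2 := by
  rw [abs_le] at ha hb
  rcases abs_cases (a + b) with ⟨h1, _⟩ | ⟨h1, _⟩ <;>
    rcases abs_cases (a - b) with ⟨h2, _⟩ | ⟨h2, _⟩ <;> linarith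

lemma combo_bound (a b T T' C : ℝ) (hC : 0 ≤ C) (ha : |a| ≤ 1) (hb : |b| ≤ 1)
    (hT : |T| ≤ C) (hT' : |T'| ≤ C) : |(a + b) * T + (a - b) * T'| ≤ 2 * C := by
  calc |(a + b) * T + (a - b) * T'| ≤ |(a + b) * T| + |(a - b) * T'| := abs_add_le _ _
    _ = |a + b| * |T| + |a - b| * |T'| := by rw [abs_mul, abs_mul]
    _ ≤ |a + b| * C + |a - b| * C :=
        add_le_add (mul_le_mul_of_nonneg_left hT (abs_nonneg _))
          (mul_le_mul_of_nonneg_left hT' (abs_nonneg _))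
    _ = (|a + b| + |a - b|) * C := by ring
    _ ≤ 2 * C := mul_le_mul_of_nonneg_right (abs_pm a b ha hb) hC

lemma Tform_bound : ∀ (n : ℕ) (x : ℕ → ℕ → ℝ), (∀ k j, |x k j| ≤ 1) →
    |Tform n x| ≤ 2 ^ (n - 1)
  | 0, x, h => by simp [Tform]
  | 1, x, h => by simpa [Tform] using h 0 0
  | 2, x, h => by
      have e : Tform 2 x = (x 0 0 + x 0 1) * x 1 0 + (x 0 0 - x 0 1) * x 1 1 := by
        simp [Tform]; ring
      rw [e]
      have := combo_bound (x 0 0) (x 0 1) (x 1 0) (x 1 1) 1 zero_le_one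
        (h 0 0) (h 0 1) (h 1 0) (h 1 1)
      norm_num at this ⊢
      linarith
  | n + 3, x, h => by
      have h1 := Tform_bound (n + 2) x h
      have h2 := Tform_bound (n + 2) (fun k j => x k (j + Tshift (n + 2) k))
        (fun k j => h k _)
      have e1 : (n + 2 : ℕ) - 1 = n + 1 := by omega
      rw [e1] at h1 h2
      have := combo_bound (x (n + 2) 0) (x (n + 2) 1) (Tform (n + 2) x)
        (Tform (n + 2) (fun k j => x k (j + Tshift (n + 2) k))) (2 ^ (n + 1))
        (by positivity) (h _ 0) (h _ 1) h1 h2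
      have e2 : (n + 3 : ℕ) - 1 = n + 2 := by omega
      rw [e2]
      calc |Tform (n + 3) x| ≤ 2 * 2 ^ (n + 1) := by
            simpa [Tform] using this
        _ = 2 ^ (n + 2) := by ring

lemma Tform_congr : ∀ (n : ℕ) (x y : ℕ → ℕ → ℝ),
    (∀ k j, k < n → j < Tshift n k → x k j = y k j) → Tform n x = Tform n y
  | 0, x, y, h => rfl
  | 1, x, y, h => by
      simp only [Tform]
      exact h 0 0 (by norm_num) (by norm_num [Tshift])
  | 2, x, y, h => by
      have hs : ∀ k, k < 2 → (2 : ℕ) = Tshift 2 k := by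
        intro k hk; interval_cases k <;> simp [Tshift]
      simp only [Tform]
      rw [h 0 0 (by norm_num) (by rw [← hs 0] <;> norm_num),
        h 0 1 (by norm_num) (by rw [← hs 0] <;> norm_num),
        h 1 0 (by norm_num) (by rw [← hs 1] <;> norm_num),
        h 1 1 (by norm_num) (by rw [← hs 1] <;> norm_num)]
  | n + 3, x, y, h => by
      have hdouble : ∀ k, k < n + 2 → Tshift (n + 3) k = 2 * Tshift (n + 2) k := by
        intro k hk
        simp only [Tshift]
        split
        · have : (n + 3 : ℕ) - 1 = ((n + 2) - 1) + 1 := by omega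
          rw [this, pow_succ]; ring
        · have : (n + 3 : ℕ) - k = ((n + 2) - k) + 1 := by omega
          rw [this, pow_succ]; ring
      have hlast : Tshift (n + 3) (n + 2) = 2 := by
        simp only [Tshift]
        rw [if_neg (by omega)]
        have : (n + 3 : ℕ) - (n + 2) = 1 := by omega
        rw [this, pow_one]
      have e1 : Tform (n + 2) x = Tform (n + 2) y := by
        apply Tform_congr
        intro k j hk hj
        exact h k j (by omega) (by rw [hdouble k hk]; omega)
      have e2 : Tform (n + 2) (fun k j => x k (j + Tshift (n + 2) k))
          = Tform (n + 2) (fun k j => y k (j + Tshift (n + 2) k)) := by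
        apply Tform_congr
        intro k j hk hj
        exact h k _ (by omega) (by rw [hdouble k hk]; omega)
      simp only [Tform]
      rw [e1, e2, h (n + 2) 0 (by omega) (by omega),
        h (n + 2) 1 (by omega) (by omega)]

lemma Tform_witness : ∀ n : ℕ, ∃ x : ℕ → ℕ → ℝ,
    (∀ k j, |x k j| ≤ 1) ∧ Tform (n + 1) x = 2 ^ n
  | 0 => ⟨fun _ _ => 1, fun _ _ => by norm_num, by simp [Tform]⟩
  | 1 => by
      refine ⟨fun k j => if j = 0 then 1 else if k = 0 then 1 else 0, ?_, ?_⟩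
      · intro k j; dsimp only; split <;> [norm_num; split <;> norm_num]
      · norm_num [Tform]
  | n + 2 => by
      obtain ⟨y, hy, hT⟩ := Tform_witness (n + 1)
      refine ⟨fun k j => if k = n + 2 then (if j = 0 then 1 else 0)
        else if j < Tshift (n + 2) k then y k j else y k (j - Tshift (n + 2) k), ?_, ?_⟩
      · intro k j; dsimp only
        split
        · split <;> norm_num
        · split <;> exact hy _ _
      · have e1 : Tform (n + 2) (fun k j => if k = n + 2 then (if j = 0 then (1:ℝ) else 0)
            else if j < Tshift (n + 2) k then y k j else y k (j - Tshift (n + 2) k))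
            = Tform (n + 2) y := by
          apply Tform_congr
          intro k j hk hj
          rw [if_neg (by omega), if_pos hj]
        have e2 : Tform (n + 2) (fun k j =>
            (fun k j => if k = n + 2 then (if j = 0 then (1:ℝ) else 0)
              else if j < Tshift (n + 2) k then y k j else y k (j - Tshift (n + 2) k))
              k (j + Tshift (n + 2) k)) = Tform (n + 2) y := by
          apply Tform_congr
          intro k j hk hj
          dsimp only
          rw [if_neg (by omega), if_neg (by omega)]
          congr 1
          omega
        simp only [Tform]
        rw [e1, e2, hT]
        norm_num
        ring

lemma Tshift_eq_Lshift (n k : ℕ) : Tshift (n + 2) k = Lshift (n + 3) k := by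
  simp only [Tshift, Lshift]
  split <;> congr 1 <;> omega

lemma Lform_eq (n : ℕ) (x : ℕ → ℕ → ℝ) :
    Lform (n + 3) x = Tform (n + 3) (fun k => if k = n + 2 then x 0 else x (k + 1)) := by
  have e1 : Tform (n + 2) (fun k => if k = n + 2 then x 0 else x (k + 1))
      = Tform (n + 2) (fun k => x (k + 1)) := by
    apply Tform_congr
    intro k j hk hj
    rw [if_neg (by omega)]
  have e2 : Tform (n + 2) (fun k j =>
      (fun k => if k = n + 2 then x 0 else x (k + 1)) k (j + Tshift (n + 2) k))
      = Tform (n + 2) (fun k j => x (k + 1) (j + Lshift (n + 3) k)) := by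
    apply Tform_congr
    intro k j hk hj
    dsimp only
    rw [if_neg (by omega), Tshift_eq_Lshift]
  simp only [Tform, Lform]
  rw [e1, e2]
  norm_num

/-- The supremum norm of `L_m` over the unit ball of `(ℓ∞)^m` equals `2^{m-1}`. -/
theorem stmt_10 (m : ℕ) (hm : 3 ≤ m) :
    sSup {v : ℝ | ∃ x : ℕ → ℕ → ℝ, (∀ k j, |x k j| ≤ 1) ∧ v = |Lform m x|}
      = 2 ^ (m - 1) := by
  obtain ⟨n, rfl⟩ : ∃ n, m = n + 3 := ⟨m - 3, by omega⟩
  have hub : ∀ v ∈ {v : ℝ | ∃ x : ℕ → ℕ → ℝ, (∀ k j, |x k j| ≤ 1) ∧ v = |Lform (n + 3) x|},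
      v ≤ 2 ^ (n + 3 - 1) := by
    rintro v ⟨x, hx, rfl⟩
    rw [Lform_eq]
    have hb : ∀ k j, |(fun k => if k = n + 2 then x 0 else x (k + 1)) k j| ≤ 1 := by
      intro k j; dsimp only; split <;> exact hx _ _
    simpa using Tform_bound (n + 3) _ hb
  have hmem : (2 : ℝ) ^ (n + 3 - 1) ∈
      {v : ℝ | ∃ x : ℕ → ℕ → ℝ, (∀ k j, |x k j| ≤ 1) ∧ v = |Lform (n + 3) x|} := by
    obtain ⟨y, hy, hT⟩ := Tform_witness (n + 2)
    refine ⟨fun k => if k = 0 then y (n + 2) else y (k - 1), ?_, ?_⟩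
    · intro k j; dsimp only; split <;> exact hy _ _
    · rw [Lform_eq]
      have : Tform (n + 3) (fun k => if k = n + 2 then
          (fun k => if k = 0 then y (n + 2) else y (k - 1)) 0 else
          (fun k => if k = 0 then y (n + 2) else y (k - 1)) (k + 1)) = Tform (n + 3) y := by
        apply Tform_congr
        intro k j hk hj
        dsimp only
        by_cases h : k = n + 2
        · rw [if_pos h, if_pos rfl, h]
        · rw [if_neg h, if_neg (by omega)]
          congr 1
      rw [this, hT, abs_of_nonneg (by positivity)]
      norm_num
  apply le_antisymm
  · exact csSup_le ⟨_, hmem⟩ hub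
  · exact le_csSup ⟨2 ^ (n + 3 - 1), hub⟩ hmem
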